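/- For any two vertices u and v of the graph W̄₁ there exists exactly one path (a walk without repeated vertices) in W̄₁ from u to v. In particular, for every normalized primitive pair (p,q) with q even there is a unique minimal edge-path in W̄₁ from (1,0) to (p,q). -/

import Mathlib

/-- The type of vertices of `W̄₁`: normalized primitive pairs `(p,q)` with `q` even. -/
def NPP1 : Type :=
  {v : ℤ × ℤ // IsCoprime v.1 v.2 ∧ (0 < v.2 ∨ (v.2 = 0 ∧ v.1 = 1)) ∧ Even v.2}

/-- The graph `W̄₁`: vertices are normalized primitive pairs with even second coordinate,
and `(p₁,q₁)`, `(p₂,q₂)` are adjacent iff `|p₁q₂ − p₂q₁| = 2`. -/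
def W1bar : SimpleGraph NPP1 where
  Adj u v := |u.1.1 * v.1.2 - v.1.1 * u.1.2| = 2
  symm := by
    constructor
    intro u v h
    rw [abs_sub_comm]
    exact h
  loopless := by
    constructor
    intro v h
    rw [sub_self, abs_zero] at h
    exact absurd h (by norm_num)

namespace W1aux

def root : NPP1 := ⟨(1, 0), isCoprime_one_left, Or.inr ⟨rfl, rfl⟩, Even.zero⟩

lemma q_nonneg (v : NPP1) : 0 ≤ v.1.2 := by
  rcases v.2.2.1 with h | h
  · exact le_of_lt h
  · exact le_of_eq h.1.symm

lemma odd_fst (v : NPP1) : Odd v.1.1 := by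
  rcases Int.even_or_odd v.1.1 with he | ho
  · exfalso
    have h2 : (2:ℤ) ∣ v.1.1 := he.two_dvd
    have h2' : (2:ℤ) ∣ v.1.2 := v.2.2.2.two_dvd
    have := (v.2.1.isUnit_of_dvd' h2 h2')
    rw [Int.isUnit_iff] at this
    omega
  · exact ho

lemma eq_root (v : NPP1) (h : v.1.2 = 0) : v = root := by
  rcases v.2.2.1 with h' | h'
  · omega
  · exact Subtype.ext (Prod.ext h'.2 h'.1)

lemma adj_iff (u v : NPP1) :
    W1bar.Adj u v ↔ u.1.1 * v.1.2 - v.1.1 * u.1.2 = 2 ∨ u.1.1 * v.1.2 - v.1.1 * u.1.2 = -2 := by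
  constructor
  · intro h
    have : |u.1.1 * v.1.2 - v.1.1 * u.1.2| = 2 := h
    rcases abs_eq (by norm_num : (0:ℤ) ≤ 2) |>.mp this with h' | h'
    · exact Or.inl h'
    · exact Or.inr h'
  · intro h
    show |u.1.1 * v.1.2 - v.1.1 * u.1.2| = 2
    rcases h with h | h <;> rw [h] <;> norm_num

lemma det_coprime {p q r s : ℤ} (hodd : Odd r)
    (h : p * s - r * q = 2 ∨ p * s - r * q = -2) : IsCoprime r s := by
  rw [Int.isCoprime_iff_gcd_eq_one]
  set g : ℕ := Int.gcd r s with hg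
  have hgr : (g:ℤ) ∣ r := Int.gcd_dvd_left r s
  have hgs : (g:ℤ) ∣ s := Int.gcd_dvd_right r s
  have hg2 : (g:ℤ) ∣ 2 := by
    have : (g:ℤ) ∣ p * s - r * q := dvd_sub (hgs.mul_left p) (hgr.mul_right q)
    rcases h with h | h
    · rwa [h] at this
    · rw [h] at this; simpa using this.neg_right
  have hg2' : g ∣ 2 := by exact_mod_cast hg2
  rcases (Nat.dvd_prime Nat.prime_two).mp hg2' with h1 | h1
  · exact h1
  · exfalso
    rw [h1] at hgr
    rw [Int.odd_iff] at hodd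
    omega

lemma exists_parent (v : NPP1) (hq : 0 < v.1.2) :
    ∃ u : NPP1, W1bar.Adj v u ∧ u.1.2 < v.1.2 := by
  obtain ⟨⟨p, q⟩, hcop, hnorm, heven⟩ := v
  replace heven : Even q := heven
  replace hcop : IsCoprime p q := hcop
  replace hq : 0 < q := hq

  have hpodd : Odd p := odd_fst ⟨(p,q), hcop, hnorm, heven⟩
  by_cases hq2 : q = 2
  · refine ⟨root, ?_, by simp [root]; omega⟩
    apply (adj_iff _ _).mpr
    right
    simp [root, hq2]
  · -- q > 2
    have hq2' : 2 < q := by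
      rw [Int.even_iff] at heven
      omega
    obtain ⟨a, b, hab⟩ := hcop
    set s₀ : ℤ := 2 * a with hs₀
    set k : ℤ := s₀ / q with hk
    set s : ℤ := s₀ % q with hs
    set r : ℤ := -(2 * b) - k * p with hr
    have hsdef : s = s₀ - q * k := by rw [hs, hk, Int.emod_def]
    have hdet : p * s - r * q = 2 := by
      rw [hsdef, hr]; ring_nf; linear_combination 2 * hab
    have hs0 : 0 ≤ s := Int.emod_nonneg s₀ (by omega)
    have hsq : s < q := Int.emod_lt_of_pos s₀ (by omega)
    obtain ⟨c, hc⟩ := heven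
    have hseven : Even s := ⟨a - c * k, by rw [hsdef, hc, hs₀]; ring⟩
    have heven : Even q := ⟨c, hc⟩
    have hspos : 0 < s := by
      rcases lt_or_eq_of_le hs0 with h | h
      · exact h
      · exfalso
        have : q * (-r) = 2 := by rw [← h] at hdet; linarith
        have : q ∣ 2 := ⟨-r, this.symm⟩
        have := Int.le_of_dvd (by norm_num) this
        omega
    rcases Int.even_or_odd r with hre | hro
    · -- use (p - r, q - s)
      have hodd' : Odd (p - r) := by
        rw [Int.odd_iff] at hpodd ⊢; rw [Int.even_iff] at hre; omega
      have hdet' : p * (q - s) - (p - r) * q = -2 := by linarith [hdet]; 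
      refine ⟨⟨(p - r, q - s), det_coprime hodd' (Or.inr hdet'),
        Or.inl (by show (0:ℤ) < q - s; omega), ?_⟩, ?_, by simp; omega⟩
      · show Even (q - s); rw [Int.even_iff] at heven hseven ⊢; omega
      · apply (adj_iff _ _).mpr; right; exact hdet'
    · refine ⟨⟨(r, s), det_coprime hro (Or.inl hdet), Or.inl hspos, hseven⟩, ?_, by simp; omega⟩
      apply (adj_iff _ _).mpr; left; exact hdet

lemma small_unique (v u₁ u₂ : NPP1) (hq : 0 < v.1.2)
    (h1 : W1bar.Adj v u₁) (h2 : W1bar.Adj v u₂)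
    (hs1 : u₁.1.2 ≤ v.1.2) (hs2 : u₂.1.2 ≤ v.1.2) : u₁ = u₂ := by
  obtain ⟨⟨p, q⟩, hcop, hnorm, heven⟩ := v
  obtain ⟨⟨r₁, s₁⟩, hcop1, hnorm1, heven1⟩ := u₁
  obtain ⟨⟨r₂, s₂⟩, hcop2, hnorm2, heven2⟩ := u₂
  replace hcop : IsCoprime p q := hcop
  replace heven : Even q := heven
  replace hq : 0 < q := hq
  replace hs1 : s₁ ≤ q := hs1
  replace hs2 : s₂ ≤ q := hs2
  have hpodd : Odd p := odd_fst ⟨(p,q), hcop, hnorm, heven⟩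
  have h1odd : Odd r₁ := odd_fst ⟨(r₁,s₁), hcop1, hnorm1, heven1⟩
  have h2odd : Odd r₂ := odd_fst ⟨(r₂,s₂), hcop2, hnorm2, heven2⟩
  have hs10 : 0 ≤ s₁ := q_nonneg ⟨(r₁,s₁), hcop1, hnorm1, heven1⟩
  have hs20 : 0 ≤ s₂ := q_nonneg ⟨(r₂,s₂), hcop2, hnorm2, heven2⟩
  have hn1 : s₁ = 0 → r₁ = 1 := by
    intro h; rcases hnorm1 with h' | h'
    · replace h' : 0 < s₁ := h'; omega
    · exact h'.2
  have hn2 : s₂ = 0 → r₂ = 1 := by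
    intro h; rcases hnorm2 with h' | h'
    · replace h' : 0 < s₂ := h'; omega
    · exact h'.2
  have hd1 : p * s₁ - r₁ * q = 2 ∨ p * s₁ - r₁ * q = -2 := (adj_iff _ _).mp h1
  have hd2 : p * s₂ - r₂ * q = 2 ∨ p * s₂ - r₂ * q = -2 := (adj_iff _ _).mp h2
  have key : ∀ r s : ℤ, Odd r → (p * s - r * q = 2 ∨ p * s - r * q = -2) → s ≠ q := by
    intro r s hro hd heq
    have hfac : q * (p - r) = 2 ∨ q * (p - r) = -2 := by
      rcases hd with hd | hd <;> [left; right] <;> rw [heq] at hd <;> linarith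
    have hdvd : q ∣ 2 := by
      rcases hfac with hf | hf
      · exact ⟨p - r, hf.symm⟩
      · exact (dvd_neg.mp ⟨p - r, by linarith⟩)
    have hqle := Int.le_of_dvd (by norm_num) hdvd
    rw [Int.even_iff] at heven
    have hq2 : q = 2 := by omega
    rw [Int.odd_iff] at hpodd hro
    rw [hq2] at hfac
    omega
  have hs1q : s₁ < q := lt_of_le_of_ne hs1 (key r₁ s₁ h1odd hd1)
  have hs2q : s₂ < q := lt_of_le_of_ne hs2 (key r₂ s₂ h2odd hd2)
  have eqcase : ∀ r s r' s' : ℤ, 0 ≤ s → s < q → 0 ≤ s' → s' < q →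
      p * s - r * q = p * s' - r' * q → s = s' ∧ r = r' := by
    intro r s r' s' h0 h1' h0' h1'' hdd
    have hqd : q ∣ s - s' := by
      have : q ∣ p * (s - s') := ⟨r - r', by linarith [hdd]⟩
      exact (hcop.symm.dvd_of_dvd_mul_left this)
    have hss : s = s' := by
      have := Int.eq_zero_of_abs_lt_dvd hqd (by rw [abs_lt]; omega)
      omega
    refine ⟨hss, ?_⟩
    rw [hss] at hdd
    have : (r - r') * q = 0 := by linarith
    rcases mul_eq_zero.mp this with h | h
    · omega
    · omega
  have opp : ∀ ra sa rb sb : ℤ, Odd ra → Odd rb → 0 ≤ sa → sa < q → 0 ≤ sb → sb < q →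
      (sa = 0 → ra = 1) → (sb = 0 → rb = 1) →
      p * sa - ra * q = 2 → p * sb - rb * q = -2 → False := by
    intro ra sa rb sb hao hbo ha0 haq hb0 hbq hna hnb hda hdb
    have hqd : q ∣ sa + sb := by
      have : q ∣ p * (sa + sb) := ⟨ra + rb, by linarith⟩
      exact hcop.symm.dvd_of_dvd_mul_left this
    obtain ⟨c, hc⟩ := hqd
    have hc01 : c = 0 ∨ c = 1 := by
      rcases lt_trichotomy c 0 with h | h | h
      · nlinarith
      · exact Or.inl h
      · right
        by_contra hne
        have : 2 ≤ c := by omega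
        nlinarith
    rcases hc01 with rfl | rfl
    · have hsa : sa = 0 := by omega
      have hsb : sb = 0 := by omega
      have hra : ra = 1 := hna hsa
      have hrb : rb = 1 := hnb hsb
      rw [hsa, hra] at hda
      rw [hsb, hrb] at hdb
      omega
    · have hsq : sa + sb = q := by omega
      have hmul : p * q = (ra + rb) * q := by linear_combination hda + hdb - p * hsq
      have hrp : p = ra + rb := mul_right_cancel₀ (by omega) hmul
      rw [Int.odd_iff] at hpodd hao hbo
      omega
  rcases hd1 with hd1 | hd1 <;> rcases hd2 with hd2 | hd2
  · obtain ⟨hs, hr⟩ := eqcase r₁ s₁ r₂ s₂ hs10 hs1q hs20 hs2q (by omega)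
    exact Subtype.ext (Prod.ext hr hs)
  · exact absurd (opp r₁ s₁ r₂ s₂ h1odd h2odd hs10 hs1q hs20 hs2q hn1 hn2 hd1 hd2) not_false
  · exact absurd (opp r₂ s₂ r₁ s₁ h2odd h1odd hs20 hs2q hs10 hs1q hn2 hn1 hd2 hd1) not_false
  · obtain ⟨hs, hr⟩ := eqcase r₁ s₁ r₂ s₂ hs10 hs1q hs20 hs2q (by omega)
    exact Subtype.ext (Prod.ext hr hs)

open SimpleGraph

lemma reach_root (v : NPP1) : W1bar.Reachable v root := by
  obtain ⟨n, hn⟩ : ∃ n, v.1.2.toNat = n := ⟨_, rfl⟩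
  induction n using Nat.strong_induction_on generalizing v with
  | _ n ih =>
    rcases v.2.2.1 with hq | hq
    · obtain ⟨u, hadj, hlt⟩ := exists_parent v hq
      have hu : W1bar.Reachable u root :=
        ih u.1.2.toNat (by have := q_nonneg u; omega) u rfl
      exact (hadj.reachable).trans hu
    · rw [eq_root v hq.1]

lemma connected : W1bar.Connected := by
  rw [connected_iff]
  exact ⟨fun u v => (reach_root u).trans (reach_root v).symm, ⟨root⟩⟩

lemma no_cycle_at_max (m : NPP1) (c : W1bar.Walk m m) (hc : c.IsCycle)
    (hmax : ∀ x ∈ c.support, x.1.2 ≤ m.1.2) : False := by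
  cases c with
  | nil => exact hc.ne_nil rfl
  | @cons _ b _ hadj p =>
    have hbm : b ≠ m := (W1bar.ne_of_adj hadj).symm
    have hpnopnil : ¬p.Nil := Walk.not_nil_of_ne hbm
    have hrev : ¬p.reverse.Nil := Walk.not_nil_of_ne (Ne.symm hbm)
    obtain ⟨d, hadj2, p2, hd⟩ := (Walk.not_nil_iff).mp hrev
    · -- d is the penultimate vertex
      have hedge : s(m, d) ∈ p.edges := by
        have : s(m, d) ∈ p.reverse.edges := by rw [hd]; exact List.mem_cons_self
        rwa [Walk.edges_reverse, List.mem_reverse] at this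
      have hnodup : (Walk.cons hadj p).edges.Nodup := hc.isTrail.edges_nodup
      rw [Walk.edges_cons, List.nodup_cons] at hnodup
      have hbd : b ≠ d := by
        intro h
        subst h
        exact hnodup.1 hedge
      have hbmem : b ∈ (Walk.cons hadj p).support := by
        rw [Walk.support_cons]
        exact List.mem_cons_of_mem _ p.start_mem_support
      have hdmem : d ∈ (Walk.cons hadj p).support := by
        rw [Walk.support_cons]
        apply List.mem_cons_of_mem
        have : d ∈ p.reverse.support := by
          rw [hd, Walk.support_cons]
          exact List.mem_cons_of_mem _ p2.start_mem_support
        rwa [Walk.support_reverse, List.mem_reverse] at this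
      have hadjd : W1bar.Adj m d := hadj2
      rcases lt_or_eq_of_le (q_nonneg m) with hqm | hqm
      · exact hbd (small_unique m b d hqm hadj hadjd (hmax b hbmem) (hmax d hdmem))
      · -- m = root; neighbors have q = 2 > 0 = m.q, contradiction
        have hmr : m = root := eq_root m hqm.symm
        have := (adj_iff m b).mp hadj
        have h1 : m.1.1 = 1 := by rw [hmr]; rfl
        have h2 : m.1.2 = 0 := hqm.symm
        rw [h1, h2] at this
        have hbq := hmax b hbmem
        rw [h2] at hbq
        have := q_nonneg b
        omega

lemma acyclic : W1bar.IsAcyclic := by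
  intro v c hc
  classical
  obtain ⟨m, hm, hmax⟩ := Finset.exists_max_image c.support.toFinset (fun x => x.1.2)
    ⟨v, List.mem_toFinset.mpr c.start_mem_support⟩
  rw [List.mem_toFinset] at hm
  refine no_cycle_at_max m (c.rotate m hm) (hc.rotate hm) ?_
  intro x hx
  apply hmax
  rw [List.mem_toFinset]
  -- membership in rotated support implies membership in original support
  rw [Walk.support_eq_cons] at hx
  rcases List.mem_cons.mp hx with rfl | hx
  · exact hm
  · have hrot := Walk.support_rotate c m hm
    have : x ∈ c.support.tail := (hrot.mem_iff).mp hx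
    exact List.mem_of_mem_tail this

end W1aux

/-- Between any two vertices of `W̄₁` there is exactly one path (a walk without repeated
vertices).  In particular, for every normalized primitive pair `(p,q)` with `q` even there
is a unique minimal edge-path in `W̄₁` from `(1,0)` to `(p,q)`. -/
theorem W1bar_unique_path (u v : NPP1) :
    ∃! w : W1bar.Walk u v, w.IsPath :=
  (SimpleGraph.isTree_iff_existsUnique_path.mp ⟨W1aux.connected, W1aux.acyclic⟩).2 u v
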